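/- There exists a constant c < ∞ such that for every r ≥ 1 and every x ∈ ℝ, |J(r,x) − 1/r| ≤ c·e^{−r}. -/

import Mathlib

open Real

/-- The annulus function `J(r,x) = (π²/(2r²)) ∑_{k ∈ ℤ} cosh(π(x+2kπ)/(2r))⁻²`. -/
noncomputable def Jfun (r x : ℝ) : ℝ :=
  (π ^ 2 / (2 * r ^ 2)) * ∑' k : ℤ, ((Real.cosh (π * (x + 2 * (k : ℝ) * π) / (2 * r))) ^ 2)⁻¹

open Real MeasureTheory Filter

noncomputable section

namespace Stmt0Aux



lemma exp_half_le_cosh (u : ℝ) : Real.exp |u| / 2 ≤ Real.cosh u := by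
  rw [← Real.cosh_abs, Real.cosh_eq]
  have := Real.exp_pos (-|u|)
  linarith

lemma sech_sq_le (u : ℝ) : ((Real.cosh u) ^ 2)⁻¹ ≤ 4 * Real.exp (-(2 * |u|)) := by
  have h1 : Real.exp |u| / 2 ≤ Real.cosh u := exp_half_le_cosh u
  have h2 : (0:ℝ) < Real.exp |u| / 2 := by positivity
  have h3 : (Real.exp |u| / 2) ^ 2 ≤ (Real.cosh u) ^ 2 := by nlinarith
  have h4 : ((Real.cosh u) ^ 2)⁻¹ ≤ ((Real.exp |u| / 2) ^ 2)⁻¹ := by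
    apply inv_anti₀ (by positivity) h3
  refine h4.trans (le_of_eq ?_)
  have h5 : (Real.exp |u| / 2) ^ 2 = Real.exp (2 * |u|) / 4 := by
    rw [div_pow, sq, ← Real.exp_add]; ring_nf
  rw [h5, Real.exp_neg]
  have := Real.exp_pos (2 * |u|)
  field_simp

-- sech² as rational function of E = exp(-2u)
lemma sech_sq_eq (u : ℝ) :
    ((Real.cosh u) ^ 2)⁻¹ = 4 * Real.exp (-(2*u)) / (1 + Real.exp (-(2*u))) ^ 2 := by
  have h1 : Real.exp (-(2*u)) = Real.exp (-u) ^ 2 := by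
    rw [sq, ← Real.exp_add]; ring_nf
  have h2 : 1 + Real.exp (-(2*u)) = Real.exp (-u) * (2 * Real.cosh u) := by
    rw [Real.cosh_eq, h1]
    have := Real.exp_add (-u) u
    simp only [neg_add_cancel, Real.exp_zero] at this
    nlinarith [Real.exp_pos (-u), Real.exp_pos u]
  rw [h2, h1]
  have h3 := Real.exp_pos (-u)
  have h4 := Real.cosh_pos u
  field_simp
  ring



lemma summable_exp_neg_abs_int {c : ℝ} (hc : 0 < c) :
    Summable (fun k : ℤ => Real.exp (-(c * |(k : ℝ)|))) := by
  have hgeom : Summable (fun n : ℕ => Real.exp (-c) ^ n) :=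
    summable_geometric_of_lt_one (le_of_lt (Real.exp_pos _))
      (by rw [Real.exp_lt_one_iff]; linarith)
  apply Summable.of_nat_of_neg
  · refine hgeom.congr fun n => ?_
    rw [← Real.exp_nat_mul]
    congr 1
    simp [mul_comm]
  · refine hgeom.congr fun n => ?_
    rw [← Real.exp_nat_mul]
    congr 1
    simp [mul_comm]

lemma summable_sech (a x : ℝ) (ha : 0 < a) :
    Summable (fun k : ℤ => ((Real.cosh (a * (x + 2 * π * (k : ℝ)))) ^ 2)⁻¹) := by
  have hmaj := (summable_exp_neg_abs_int (c := 4 * π * a) (by positivity)).mul_left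
      (4 * Real.exp (2 * a * |x|))
  refine Summable.of_nonneg_of_le (fun k => by positivity) (fun k => ?_) hmaj
  have h1 : ((Real.cosh (a * (x + 2 * π * (k : ℝ)))) ^ 2)⁻¹
      ≤ 4 * Real.exp (-(2 * |a * (x + 2 * π * (k : ℝ))|)) := sech_sq_le _
  refine h1.trans ?_
  have hre : 4 * Real.exp (2 * a * |x|) * Real.exp (-(4 * π * a * |(k:ℝ)|))
      = 4 * Real.exp (2 * a * |x| + -(4 * π * a * |(k:ℝ)|)) := by
    rw [Real.exp_add]; ring
  rw [hre]
  apply mul_le_mul_of_nonneg_left _ (by norm_num)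
  apply Real.exp_le_exp.2
  have h2 : 2 * π * |(k:ℝ)| - |x| ≤ |x + 2 * π * (k:ℝ)| := by
    have h := abs_sub_abs_le_abs_sub (2 * π * (k:ℝ)) (-x)
    have h' : |2 * π * (k:ℝ)| = 2 * π * |(k:ℝ)| := by
      rw [abs_mul, abs_of_pos (by positivity : (0:ℝ) < 2 * π)]
    rw [h', abs_neg] at h
    calc 2 * π * |(k:ℝ)| - |x| ≤ |2 * π * (k:ℝ) - -x| := h
    _ = |x + 2 * π * (k:ℝ)| := by rw [sub_neg_eq_add, add_comm]
  have h3 : |a * (x + 2 * π * (k:ℝ))| = a * |x + 2 * π * (k:ℝ)| := by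
    rw [abs_mul, abs_of_pos ha]
  rw [h3]
  nlinarith [abs_nonneg x, abs_nonneg ((k:ℝ))]




lemma fourierIntegral_sech_sq (a x ξ : ℝ) (ha : 0 < a) :
    FourierTransform.fourier
        (fun t : ℝ => ((((Real.cosh (a * (x + 2 * π * t))) ^ 2)⁻¹ : ℝ) : ℂ)) ξ
      = ((π * a)⁻¹ : ℝ) • (Complex.exp (((x * ξ : ℝ) : ℂ) * Complex.I) *
          Complex.betaIntegral (1 - (((ξ / (2*a) : ℝ)) : ℂ) * Complex.I)
            (1 + (((ξ / (2*a) : ℝ)) : ℂ) * Complex.I)) := by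
  have hπ := Real.pi_pos
  set s : ℂ := (((ξ / (2*a) : ℝ)) : ℂ) * Complex.I with hs
  set E : ℝ → ℝ := fun t => Real.exp (-(2*a) * (x + 2*π*t)) with hE
  set τ : ℝ → ℝ := fun t => (1 + E t)⁻¹ with hτ
  set D : ℝ → ℝ := fun t => 4*π*a * E t / (1 + E t)^2 with hD
  set g : ℝ → ℂ := fun y => ((π*a)⁻¹ : ℝ) •
      (Complex.exp (((x*ξ : ℝ) : ℂ) * Complex.I) *
        (((y : ℝ) : ℂ) ^ (-s) * ((1:ℂ) - ((y : ℝ) : ℂ)) ^ s)) with hg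
  have hEpos : ∀ t, 0 < E t := fun t => Real.exp_pos _
  have h1E : ∀ t, 0 < 1 + E t := fun t => by linarith [hEpos t]
  have hτmem : ∀ t, τ t ∈ Set.Ioo (0:ℝ) 1 := by
    intro t
    constructor
    · exact inv_pos.2 (h1E t)
    · simp only [hτ]
      exact inv_lt_one_of_one_lt₀ (by linarith [hEpos t])
  -- derivative
  have hderiv : ∀ t, HasDerivAt τ (D t) t := by
    intro t
    have h1 : HasDerivAt (fun t : ℝ => -(2*a) * (x + 2*π*t)) (-(2*a) * (2*π)) t := by
      simpa using (((hasDerivAt_id t).const_mul (2*π)).const_add x).const_mul (-(2*a))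
    have h2 : HasDerivAt E (Real.exp (-(2*a) * (x + 2*π*t)) * (-(2*a) * (2*π))) t := h1.exp
    have h3 : HasDerivAt (fun t => 1 + E t) (Real.exp (-(2*a) * (x + 2*π*t)) * (-(2*a) * (2*π))) t :=
      h2.const_add 1
    have h4 : HasDerivAt (fun t => (1 + E t)⁻¹)
        (-(Real.exp (-(2*a) * (x + 2*π*t)) * (-(2*a) * (2*π))) / (1 + E t) ^ 2) t :=
      h3.inv (h1E t).ne'
    convert h4 using 1
    have h5 := (h1E t).ne'
    simp only [hD, hE] at *
    field_simp
    ring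
  -- strict monotonicity
  have hmono : StrictMono τ := by
    intro t₁ t₂ h12
    have hE12 : E t₂ < E t₁ := by
      apply Real.exp_lt_exp.2
      nlinarith [mul_pos (mul_pos ha hπ) (sub_pos.2 h12)]
    exact inv_strictAnti₀ (h1E t₂) (by linarith)
  -- image
  have himg : τ '' Set.univ = Set.Ioo (0:ℝ) 1 := by
    apply Set.eq_of_subset_of_subset
    · rintro y ⟨t, -, rfl⟩; exact hτmem t
    · rintro y ⟨hy0, hy1⟩
      refine ⟨(Real.log (y⁻¹ - 1) / (-(2*a)) - x) / (2*π), trivial, ?_⟩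
      have h1y : 1 < y⁻¹ := by simpa using inv_strictAnti₀ hy0 hy1
      have hy' : 0 < y⁻¹ - 1 := by linarith
      have harg : -(2*a) * (x + 2*π*((Real.log (y⁻¹ - 1) / (-(2*a)) - x) / (2*π)))
          = Real.log (y⁻¹ - 1) := by
        field_simp
        ring
      simp only [hτ, hE]
      rw [harg, Real.exp_log hy']
      have : 1 + (y⁻¹ - 1) = y⁻¹ := by ring
      rw [this, inv_inv]
  -- pointwise integrand identity
  have hkey : ∀ t, |D t| • g (τ t)
      = Complex.exp (((-2*π*t*ξ : ℝ) : ℂ) * Complex.I) •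
          ((((Real.cosh (a * (x + 2 * π * t))) ^ 2)⁻¹ : ℝ) : ℂ) := by
    intro t
    have hEt : E t = Real.exp (-(2 * (a * (x + 2*π*t)))) := by
      simp only [hE]; congr 1; ring
    have hEpos' := hEpos t
    have h1E' := h1E t
    have hτpos : 0 < τ t := (hτmem t).1
    have hτlt1 : τ t < 1 := (hτmem t).2
    have h1mτ : 1 - τ t = E t / (1 + E t) := by
      simp only [hτ]; field_simp; ring
    have h1mτpos : 0 < 1 - τ t := by rw [h1mτ]; positivity
    have hcast : (1:ℂ) - ((τ t : ℝ) : ℂ) = ((1 - τ t : ℝ) : ℂ) := by push_cast; ring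
    have hcp1 : ((τ t : ℝ) : ℂ) ^ (-s) = Complex.exp (-((Real.log (τ t) : ℝ) : ℂ) * s) := by
      rw [Complex.cpow_def_of_ne_zero (by exact_mod_cast hτpos.ne')]
      congr 1
      rw [← Complex.ofReal_log hτpos.le]; ring
    have hcp2 : ((1:ℂ) - ((τ t : ℝ) : ℂ)) ^ s
        = Complex.exp (((Real.log (1 - τ t) : ℝ) : ℂ) * s) := by
      rw [hcast, Complex.cpow_def_of_ne_zero (by exact_mod_cast h1mτpos.ne')]
      congr 1
      rw [← Complex.ofReal_log h1mτpos.le]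
    have hlog : Real.log (1 - τ t) - Real.log (τ t) = -(2*a) * (x + 2*π*t) := by
      rw [← Real.log_div h1mτpos.ne' hτpos.ne']
      have hq : (1 - τ t) / τ t = E t := by
        rw [h1mτ]
        simp only [hτ]
        field_simp
      rw [hq]
      simp only [hE]
      rw [Real.log_exp]
    have hprod : ((τ t : ℝ) : ℂ) ^ (-s) * ((1:ℂ) - ((τ t : ℝ) : ℂ)) ^ s
        = Complex.exp (((-(2*a) * (x + 2*π*t) : ℝ) : ℂ) * s) := by
      rw [hcp1, hcp2, ← Complex.exp_add]
      congr 1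
      rw [← hlog]
      push_cast
      ring
    have hphase : Complex.exp (((x*ξ : ℝ) : ℂ) * Complex.I) *
        Complex.exp (((-(2*a) * (x + 2*π*t) : ℝ) : ℂ) * s)
        = Complex.exp (((-2*π*t*ξ : ℝ) : ℂ) * Complex.I) := by
      rw [← Complex.exp_add]
      congr 1
      rw [hs]
      have ha' : (a : ℂ) ≠ 0 := by exact_mod_cast ha.ne'
      push_cast
      field_simp
      ring
    have hDnn : 0 ≤ D t := by
      simp only [hD]
      positivity
    have hsech : (π*a)⁻¹ * D t = ((Real.cosh (a * (x + 2 * π * t))) ^ 2)⁻¹ := by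
      rw [sech_sq_eq (a * (x + 2*π*t)), ← hEt]
      simp only [hD]
      have h5 := h1E'.ne'
      field_simp
    simp only [hg, smul_smul, abs_of_nonneg hDnn]
    rw [hprod, smul_eq_mul, Complex.real_smul]
    rw [← hphase]
    have : (((D t * (π*a)⁻¹ : ℝ)) : ℂ) = ((((Real.cosh (a * (x + 2 * π * t))) ^ 2)⁻¹ : ℝ) : ℂ) := by
      rw [mul_comm (D t)]
      exact_mod_cast congrArg (fun y : ℝ => ((y : ℝ) : ℂ)) hsech
    rw [this]
    ring
  -- beta integral as Ioo integral
  have hbeta : Complex.betaIntegral (1-s) (1+s)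
      = ∫ y in Set.Ioo (0:ℝ) 1, (((y : ℝ) : ℂ) ^ (-s) * ((1:ℂ) - ((y : ℝ) : ℂ)) ^ s) := by
    rw [Complex.betaIntegral, intervalIntegral.integral_of_le zero_le_one,
      MeasureTheory.integral_Ioc_eq_integral_Ioo]
    congr 1
    ext y
    rw [(by ring : (1:ℂ) - s - 1 = -s), (by ring : (1:ℂ) + s - 1 = s)]
  -- main computation
  rw [Real.fourier_real_eq_integral_exp_smul]
  calc (∫ t : ℝ, Complex.exp (((-2*π*t*ξ : ℝ) : ℂ) * Complex.I) •
          ((((Real.cosh (a * (x + 2 * π * t))) ^ 2)⁻¹ : ℝ) : ℂ))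
      = ∫ t : ℝ, |D t| • g (τ t) := by
        congr 1; ext t; rw [hkey t]
    _ = ∫ t in Set.univ, |D t| • g (τ t) := MeasureTheory.setIntegral_univ.symm
    _ = ∫ y in τ '' Set.univ, g y :=
        (MeasureTheory.integral_image_eq_integral_abs_deriv_smul MeasurableSet.univ
          (fun t _ => (hderiv t).hasDerivWithinAt) hmono.injective.injOn g).symm
    _ = ∫ y in Set.Ioo (0:ℝ) 1, g y := by rw [himg]
    _ = ((π*a)⁻¹ : ℝ) • (Complex.exp (((x*ξ : ℝ) : ℂ) * Complex.I) *
          ∫ y in Set.Ioo (0:ℝ) 1, (((y : ℝ) : ℂ) ^ (-s) * ((1:ℂ) - ((y : ℝ) : ℂ)) ^ s)) := by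
        simp only [hg]
        rw [MeasureTheory.integral_smul]
        congr 1
        exact MeasureTheory.integral_const_mul _ _
    _ = ((π * a)⁻¹ : ℝ) • (Complex.exp (((x * ξ : ℝ) : ℂ) * Complex.I) *
          Complex.betaIntegral (1 - s) (1 + s)) := by rw [hbeta]




lemma beta_val {b : ℝ} (hb : b ≠ 0) :
    Complex.betaIntegral (1 - ((b/π : ℝ) : ℂ) * Complex.I) (1 + ((b/π : ℝ) : ℂ) * Complex.I)
      = ((b / Real.sinh b : ℝ) : ℂ) := by
  have hπ := Real.pi_pos
  set s : ℂ := ((b/π : ℝ) : ℂ) * Complex.I with hs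
  have hc : (b/π : ℝ) ≠ 0 := div_ne_zero hb hπ.ne'
  have hs0 : s ≠ 0 := mul_ne_zero (by exact_mod_cast hc) Complex.I_ne_zero
  have h1 : 0 < (1 - s).re := by
    simp [hs, Complex.sub_re, Complex.one_re, Complex.mul_re]
  have h2 : 0 < (1 + s).re := by
    simp [hs, Complex.add_re, Complex.one_re, Complex.mul_re]
  have hbeta := Complex.Gamma_mul_Gamma_eq_betaIntegral h1 h2
  have hsum : (1 - s) + (1 + s) = 2 := by ring
  rw [hsum] at hbeta
  have hΓ2 : Complex.Gamma 2 = 1 := by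
    have h := Complex.Gamma_add_one 1 one_ne_zero
    rw [Complex.Gamma_one, mul_one] at h
    rw [show (2:ℂ) = 1 + 1 by norm_num, h]
  rw [hΓ2, one_mul] at hbeta
  rw [← hbeta]
  have h1s : Complex.Gamma (1 + s) = s * Complex.Gamma s := by
    rw [add_comm]; exact Complex.Gamma_add_one s hs0
  rw [h1s]
  have hrefl := Complex.Gamma_mul_Gamma_one_sub s
  have hsin : Complex.sin ((π : ℂ) * s) = ((Real.sinh b : ℝ) : ℂ) * Complex.I := by
    have harg : (π : ℂ) * s = ((b : ℝ) : ℂ) * Complex.I := by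
      rw [hs]
      push_cast
      have : (π : ℂ) ≠ 0 := by exact_mod_cast hπ.ne'
      field_simp
    rw [harg, Complex.sin_mul_I, Complex.ofReal_sinh]
  have hsinh0 : Real.sinh b ≠ 0 := by
    intro h
    exact hb (by simpa using Real.sinh_eq_zero.mp h)
  have hsinh0' : ((Real.sinh b : ℝ) : ℂ) ≠ 0 := by exact_mod_cast hsinh0
  calc Complex.Gamma (1 - s) * (s * Complex.Gamma s)
      = s * (Complex.Gamma s * Complex.Gamma (1 - s)) := by ring
    _ = s * ((π : ℂ) / Complex.sin ((π : ℂ) * s)) := by rw [hrefl]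
    _ = ((b / Real.sinh b : ℝ) : ℂ) := by
        rw [hsin, hs]
        have : (π : ℂ) ≠ 0 := by exact_mod_cast hπ.ne'
        push_cast
        field_simp [Complex.I_ne_zero]




noncomputable def W (r x : ℝ) : ℝ → ℂ :=
  fun t => ((((Real.cosh ((π/(2*r)) * (x + 2 * π * t))) ^ 2)⁻¹ : ℝ) : ℂ)

lemma FT_ne_zero (r x ξ : ℝ) (hr : 0 < r) (hξ : ξ ≠ 0) :
    FourierTransform.fourier (W r x) ξ
      = ((2*r/π^2 : ℝ) : ℂ) * (Complex.exp (((x*ξ : ℝ) : ℂ) * Complex.I) *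
          ((ξ*r / Real.sinh (ξ*r) : ℝ) : ℂ)) := by
  have hπ := Real.pi_pos
  have ha : 0 < π/(2*r) := by positivity
  rw [show W r x = (fun t : ℝ =>
      ((((Real.cosh ((π/(2*r)) * (x + 2 * π * t))) ^ 2)⁻¹ : ℝ) : ℂ)) from rfl,
    fourierIntegral_sech_sq (π/(2*r)) x ξ ha]
  have hc : ξ / (2 * (π/(2*r))) = ξ * r / π := by
    field_simp
  rw [hc, beta_val (mul_ne_zero hξ hr.ne')]
  have h2 : ((π * (π/(2*r)))⁻¹ : ℝ) = 2*r/π^2 := by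
    field_simp
  rw [h2, Complex.real_smul]

lemma FT_zero (r x : ℝ) (hr : 0 < r) :
    FourierTransform.fourier (W r x) 0 = ((2*r/π^2 : ℝ) : ℂ) := by
  have hπ := Real.pi_pos
  have ha : 0 < π/(2*r) := by positivity
  rw [show W r x = (fun t : ℝ =>
      ((((Real.cosh ((π/(2*r)) * (x + 2 * π * t))) ^ 2)⁻¹ : ℝ) : ℂ)) from rfl,
    fourierIntegral_sech_sq (π/(2*r)) x 0 ha]
  have h0 : ((0 / (2 * (π/(2*r))) : ℝ) : ℂ) = 0 := by norm_num
  rw [h0]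
  simp only [zero_mul, sub_zero, add_zero, mul_zero, Complex.ofReal_zero,
    Complex.exp_zero, one_mul]
  rw [Complex.betaIntegral_eval_one_right (by norm_num : (0:ℝ) < (1:ℂ).re)]
  have h2 : ((π * (π/(2*r)))⁻¹ : ℝ) = 2*r/π^2 := by
    field_simp
  rw [h2, Complex.real_smul, div_one, mul_one]

lemma exp_le_half : Real.exp (-1) ≤ 1/2 := by
  rw [Real.exp_neg]
  rw [inv_le_iff_one_le_mul₀ (Real.exp_pos 1)]
  nlinarith [Real.exp_one_gt_d9]

lemma sinh_ge (v : ℝ) (hv : 1 ≤ v) : Real.exp v / 4 ≤ Real.sinh v := by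
  rw [Real.sinh_eq]
  have h1 : Real.exp (-v) ≤ 1 := by
    rw [Real.exp_le_one_iff]; linarith
  have h2 : (2:ℝ) ≤ Real.exp v := by
    have := Real.add_one_le_exp v
    linarith
  linarith

lemma summable_abs_mul_exp : Summable (fun k : ℤ => |(k:ℝ)| * Real.exp (-|(k:ℝ)|)) := by
  have hgeom : Summable (fun n : ℕ => (n:ℝ)^1 * Real.exp (-1) ^ n) :=
    summable_pow_mul_geometric_of_norm_lt_one 1
      (by rw [Real.norm_eq_abs, abs_of_pos (Real.exp_pos _), Real.exp_lt_one_iff]; norm_num)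
  apply Summable.of_nat_of_neg
  · refine hgeom.congr fun n => ?_
    rw [pow_one, ← Real.exp_nat_mul]
    simp [mul_comm]
  · refine hgeom.congr fun n => ?_
    rw [pow_one, ← Real.exp_nat_mul]
    simp [mul_comm]

lemma tsum_nat_mul_exp_le : ∑' n : ℕ, (n:ℝ) * Real.exp (-(n:ℝ)) ≤ 2 := by
  have hhalf : Summable (fun n : ℕ => (n:ℝ) * (1/2) ^ n) := by
    have := summable_pow_mul_geometric_of_norm_lt_one (R := ℝ) 1
      (r := 1/2) (by rw [Real.norm_eq_abs, abs_of_nonneg (by norm_num : (0:ℝ) ≤ 1/2)]; norm_num)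
    simpa [pow_one] using this
  have hexp : Summable (fun n : ℕ => (n:ℝ) * Real.exp (-(n:ℝ))) := by
    have := summable_pow_mul_geometric_of_norm_lt_one (R := ℝ) 1
      (r := Real.exp (-1))
      (by rw [Real.norm_eq_abs, abs_of_pos (Real.exp_pos _), Real.exp_lt_one_iff]; norm_num)
    refine this.congr fun n => ?_
    rw [pow_one, ← Real.exp_nat_mul]
    simp [mul_comm]
  have hle : ∀ n : ℕ, (n:ℝ) * Real.exp (-(n:ℝ)) ≤ (n:ℝ) * (1/2) ^ n := by
    intro n
    apply mul_le_mul_of_nonneg_left _ (Nat.cast_nonneg n)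
    calc Real.exp (-(n:ℝ)) = Real.exp (-1) ^ n := by
          rw [← Real.exp_nat_mul]; congr 1; ring
    _ ≤ (1/2) ^ n := pow_le_pow_left₀ (le_of_lt (Real.exp_pos _)) exp_le_half n
  calc ∑' n : ℕ, (n:ℝ) * Real.exp (-(n:ℝ)) ≤ ∑' n : ℕ, (n:ℝ) * (1/2) ^ n :=
        Summable.tsum_le_tsum hle hexp hhalf
  _ = (1/2) / (1 - 1/2)^2 := tsum_coe_mul_geometric_of_norm_lt_one
        (by rw [Real.norm_eq_abs, abs_of_nonneg (by norm_num : (0:ℝ) ≤ 1/2)]; norm_num)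
  _ = 2 := by norm_num

lemma summable_nat_mul_exp : Summable (fun n : ℕ => (n:ℝ) * Real.exp (-(n:ℝ))) := by
  have := summable_pow_mul_geometric_of_norm_lt_one (R := ℝ) 1
    (r := Real.exp (-1))
    (by rw [Real.norm_eq_abs, abs_of_pos (Real.exp_pos _), Real.exp_lt_one_iff]; norm_num)
  refine this.congr fun n => ?_
  rw [pow_one, ← Real.exp_nat_mul]
  simp [mul_comm]

lemma tsum_abs_mul_exp_le : ∑' k : ℤ, |(k:ℝ)| * Real.exp (-|(k:ℝ)|) ≤ 4 := by
  set f : ℤ → ℝ := fun k => |(k:ℝ)| * Real.exp (-|(k:ℝ)|) with hf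
  have he1 : ∀ n : ℕ, f (n:ℤ) = (n:ℝ) * Real.exp (-(n:ℝ)) := by
    intro n
    simp [hf, abs_of_nonneg (Nat.cast_nonneg n : (0:ℝ) ≤ (n:ℝ))]
  have he2 : ∀ n : ℕ, f (-((n:ℤ)+1)) = ((n:ℝ)+1) * Real.exp (-((n:ℝ)+1)) := by
    intro n
    have h : ((((-((n:ℤ)+1)) : ℤ)) : ℝ) = -((n:ℝ)+1) := by push_cast; ring
    simp only [hf, h, abs_neg]
    rw [abs_of_nonneg (by positivity : (0:ℝ) ≤ (n:ℝ)+1)]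
  have hshift : Summable (fun n : ℕ => ((n:ℝ)+1) * Real.exp (-((n:ℝ)+1))) := by
    have := (summable_nat_add_iff 1).2 summable_nat_mul_exp
    refine this.congr fun n => ?_
    push_cast
    ring_nf
  have hn1 : Summable (fun n : ℕ => f (n:ℤ)) := summable_nat_mul_exp.congr fun n => (he1 n).symm
  have hn2 : Summable (fun n : ℕ => f (-((n:ℤ)+1))) := hshift.congr fun n => (he2 n).symm
  rw [tsum_of_nat_of_neg_add_one hn1 hn2]
  have hb1 : ∑' n : ℕ, f (n:ℤ) ≤ 2 := by
    rw [tsum_congr he1]; exact tsum_nat_mul_exp_le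
  have hb2 : ∑' n : ℕ, f (-((n:ℤ)+1)) ≤ 2 := by
    rw [tsum_congr he2]
    have hz := Summable.tsum_eq_zero_add summable_nat_mul_exp
    simp only [Nat.cast_zero, neg_zero, Real.exp_zero, zero_mul, mul_one, zero_add] at hz
    have : ∑' n : ℕ, ((n:ℝ)+1) * Real.exp (-((n:ℝ)+1))
        = ∑' n : ℕ, ((n+1 : ℕ):ℝ) * Real.exp (-((n+1 : ℕ):ℝ)) := by
      apply tsum_congr
      intro n
      push_cast
      ring_nf
    rw [this, ← hz]
    exact tsum_nat_mul_exp_le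
  linarith



lemma abs_shift_lower (x t : ℝ) : 2*π*|t| - |x| ≤ |x + 2*π*t| := by
  have h := abs_sub_abs_le_abs_sub (2 * π * t) (-x)
  have h' : |2 * π * t| = 2 * π * |t| := by
    rw [abs_mul, abs_of_pos (by positivity : (0:ℝ) < 2 * π)]
  rw [h', abs_neg] at h
  calc 2 * π * |t| - |x| ≤ |2 * π * t - -x| := h
  _ = |x + 2 * π * t| := by rw [sub_neg_eq_add, add_comm]

lemma FT_norm_le (r x : ℝ) (hr : 1 ≤ r) (n : ℤ) (hn : n ≠ 0) :
    ‖FourierTransform.fourier (W r x) ((n:ℤ):ℝ)‖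
      ≤ (8*r^2/π^2) * Real.exp 1 * Real.exp (-r) * (|((n:ℤ):ℝ)| * Real.exp (-|((n:ℤ):ℝ)|)) := by
  have hπ := Real.pi_pos
  have hr0 : (0:ℝ) < r := lt_of_lt_of_le one_pos hr
  have hn' : (((n:ℤ):ℝ)) ≠ 0 := Int.cast_ne_zero.2 hn
  rw [FT_ne_zero r x ((n:ℤ):ℝ) hr0 hn']
  rw [norm_mul, norm_mul, Complex.norm_exp_ofReal_mul_I, one_mul,
    Complex.norm_real, Complex.norm_real, Real.norm_eq_abs, Real.norm_eq_abs]
  set m := |((n:ℤ):ℝ)| with hm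
  have hm1 : 1 ≤ m := by
    rw [hm, ← Int.cast_abs]
    exact_mod_cast Int.one_le_abs hn
  have hm0 : 0 < m := lt_of_lt_of_le one_pos hm1
  have habs1 : |2*r/π^2| = 2*r/π^2 := abs_of_pos (by positivity)
  have habs2 : |((n:ℤ):ℝ)*r / Real.sinh (((n:ℤ):ℝ)*r)| = m*r / Real.sinh (m*r) := by
    rw [abs_div, Real.abs_sinh, abs_mul, abs_of_pos hr0, ← hm]
  rw [habs1, habs2]
  have hmr1 : 1 ≤ m*r := by nlinarith
  have hsinh := sinh_ge (m*r) hmr1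
  have hsinhpos : (0:ℝ) < Real.sinh (m*r) :=
    lt_of_lt_of_le (by positivity) hsinh
  have hquot : m*r / Real.sinh (m*r) ≤ 4 * (m*r) * Real.exp (-(m*r)) := by
    rw [div_le_iff₀ hsinhpos]
    have hmul : Real.exp (-(m*r)) * Real.exp (m*r) = 1 := by
      rw [← Real.exp_add]; simp
    have h4 : (0:ℝ) ≤ 4 * (m*r) * Real.exp (-(m*r)) := by positivity
    calc m*r = 4 * (m*r) * Real.exp (-(m*r)) * (Real.exp (m*r)/4) := by
          rw [show 4 * (m*r) * Real.exp (-(m*r)) * (Real.exp (m*r)/4)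
              = (m*r) * (Real.exp (-(m*r)) * Real.exp (m*r)) by ring, hmul, mul_one]
    _ ≤ 4 * (m*r) * Real.exp (-(m*r)) * Real.sinh (m*r) := mul_le_mul_of_nonneg_left hsinh h4
  have hexp3 : Real.exp (-(m*r)) ≤ Real.exp 1 * Real.exp (-r) * Real.exp (-m) := by
    rw [← Real.exp_add, ← Real.exp_add]
    apply Real.exp_le_exp.2
    nlinarith
  calc 2*r/π^2 * (m*r/Real.sinh (m*r))
      ≤ 2*r/π^2 * (4*(m*r)*Real.exp (-(m*r))) :=
        mul_le_mul_of_nonneg_left hquot (by positivity)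
  _ ≤ 2*r/π^2 * (4*(m*r)*(Real.exp 1 * Real.exp (-r) * Real.exp (-m))) := by
      apply mul_le_mul_of_nonneg_left _ (by positivity)
      apply mul_le_mul_of_nonneg_left hexp3 (by positivity)
  _ = 8*r^2/π^2 * Real.exp 1 * Real.exp (-r) * (m * Real.exp (-m)) := by ring

lemma sq_le_exp (v : ℝ) (hv : 0 ≤ v) : v^2 ≤ 4 * Real.exp v := by
  have h := Real.add_one_le_exp (v/2)
  have h2 : Real.exp (v/2) ^ 2 = Real.exp v := by
    rw [sq, ← Real.exp_add]; ring_nf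
  nlinarith [Real.exp_pos (v/2)]

lemma W_continuous (r x : ℝ) : Continuous (W r x) := by
  apply Complex.continuous_ofReal.comp
  apply Continuous.inv₀
  · exact (Real.continuous_cosh.comp (by continuity)).pow 2
  · intro t
    exact pow_ne_zero _ (Real.cosh_pos _).ne'

lemma W_isBigO (r x : ℝ) (hr : 0 < r) :
    (W r x) =O[cocompact ℝ] (fun t : ℝ => |t| ^ (-(2:ℝ))) := by
  have hπ := Real.pi_pos
  set a := π/(2*r) with ha
  have ha0 : 0 < a := by positivity
  rw [Asymptotics.isBigO_iff]
  refine ⟨4/a^2, ?_⟩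
  filter_upwards [tendsto_norm_cocompact_atTop.eventually_ge_atTop (|x| + 1)] with t ht
  rw [Real.norm_eq_abs] at ht
  have ht1 : 1 ≤ |t| := le_trans (by linarith [abs_nonneg x]) ht
  have ht0 : t ≠ 0 := by
    intro h
    rw [h, abs_zero] at ht1
    linarith
  set u := x + 2*π*t with hu
  have huabs : |t| ≤ |u| := by
    have h1 := abs_shift_lower x t
    nlinarith [Real.pi_gt_three, abs_nonneg x]
  have hu2 : t^2 ≤ u^2 := by
    nlinarith [sq_abs t, sq_abs u, abs_nonneg t]
  -- ‖W r x t‖ = sech²(a u)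
  have hWnorm : ‖W r x t‖ = ((Real.cosh (a * u))^2)⁻¹ := by
    rw [show W r x t = ((((Real.cosh (a * u)) ^ 2)⁻¹ : ℝ) : ℂ) from rfl,
      Complex.norm_real, Real.norm_eq_abs, abs_of_nonneg (by positivity)]
  have h1 : ((Real.cosh (a * u))^2)⁻¹ ≤ 4 * Real.exp (-(2 * |a * u|)) := sech_sq_le _
  have hv := sq_le_exp (2 * |a * u|) (by positivity)
  have hexppos := Real.exp_pos (2 * |a * u|)
  have hau : a^2 * t^2 ≤ Real.exp (2 * |a * u|) := by
    nlinarith [sq_abs (a * u)]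
  have hat : (0:ℝ) < a^2 * t^2 := by
    have : t^2 > 0 := by positivity
    positivity
  have hinv : (Real.exp (2 * |a * u|))⁻¹ ≤ (a^2 * t^2)⁻¹ :=
    inv_anti₀ hat hau
  have hbound : ‖W r x t‖ ≤ 4/a^2 * (t^2)⁻¹ := by
    rw [hWnorm]
    calc ((Real.cosh (a * u))^2)⁻¹ ≤ 4 * Real.exp (-(2 * |a * u|)) := h1
    _ = 4 * (Real.exp (2 * |a * u|))⁻¹ := by rw [Real.exp_neg]
    _ ≤ 4 * (a^2 * t^2)⁻¹ := by linarith
    _ = 4/a^2 * (t^2)⁻¹ := by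
        rw [mul_inv]
        ring
  have hg : |t| ^ (-(2:ℝ)) = (t^2)⁻¹ := by
    rw [Real.rpow_neg (abs_nonneg t)]
    congr 1
    rw [show ((2:ℝ)) = ((2:ℕ):ℝ) by norm_num, Real.rpow_natCast, sq_abs]
  rw [Real.norm_eq_abs (|t| ^ (-(2:ℝ))), hg, abs_of_nonneg (by positivity)]
  exact hbound

lemma main_bound (r x : ℝ) (hr : 1 ≤ r) :
    |(∑' k : ℤ, ((Real.cosh ((π/(2*r)) * (x + 2*π*(k:ℝ))))^2)⁻¹) - 2*r/π^2|
      ≤ (8*r^2/π^2) * Real.exp 1 * Real.exp (-r) * 4 := by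
  have hπ := Real.pi_pos
  have hr0 : (0:ℝ) < r := lt_of_lt_of_le one_pos hr
  set C := (8*r^2/π^2) * Real.exp 1 * Real.exp (-r) with hC
  have hC0 : 0 ≤ C := by rw [hC]; positivity
  set g : ℤ → ℝ := fun n => |(n:ℝ)| * Real.exp (-|(n:ℝ)|) with hg
  have hg0 : ∀ n, 0 ≤ g n := fun n => by simp only [hg]; positivity
  have hgsum : Summable g := summable_abs_mul_exp
  -- summability of the Fourier side
  have hFbound : ∀ n : ℤ, n ≠ 0 → ‖FourierTransform.fourier (W r x) (n:ℝ)‖ ≤ C * g n := by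
    intro n hn
    have h := FT_norm_le r x hr n hn
    simp only [hC, hg]
    exact h
  have hmaj : Summable (fun n : ℤ => (2*r/π^2) * Real.exp (-(1 * |(n:ℝ)|)) + C * g n) :=
    ((summable_exp_neg_abs_int one_pos).mul_left _).add (hgsum.mul_left C)
  have hFnorm : ∀ n : ℤ, ‖FourierTransform.fourier (W r x) (n:ℝ)‖
      ≤ (2*r/π^2) * Real.exp (-(1 * |(n:ℝ)|)) + C * g n := by
    intro n
    by_cases hn : n = 0
    · subst hn
      rw [show ((0:ℤ):ℝ) = 0 by norm_num, FT_zero r x hr0, Complex.norm_real,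
        Real.norm_eq_abs, abs_of_pos (by positivity)]
      have hgz : C * g 0 = 0 := by simp [hg]
      rw [hgz]
      simp
    · have h1 := hFbound n hn
      have h2 : 0 ≤ (2*r/π^2) * Real.exp (-(1 * |(n:ℝ)|)) := by positivity
      linarith
  have hFsum : Summable (fun n : ℤ => FourierTransform.fourier (W r x) (n:ℝ)) :=
    Summable.of_norm (Summable.of_nonneg_of_le (fun n => norm_nonneg _) hFnorm hmaj)
  -- Poisson summation
  have hPoisson := Real.tsum_eq_tsum_fourier_of_rpow_decay_of_summable
    (W_continuous r x) one_lt_two (W_isBigO r x hr0) hFsum 0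
  have hL : ∀ n : ℤ, W r x (0 + (n:ℝ)) = W r x (n:ℝ) := fun n => by rw [zero_add]
  rw [tsum_congr hL] at hPoisson
  have hR : ∀ n : ℤ, FourierTransform.fourier (W r x) (n:ℝ) * (fourier n) ((0:ℝ) : UnitAddCircle)
      = FourierTransform.fourier (W r x) (n:ℝ) := by
    intro n
    have h0 : (((0:ℝ)) : UnitAddCircle) = 0 := by
      rw [← QuotientAddGroup.mk_zero]
    rw [h0, fourier_eval_zero, mul_one]
  rw [tsum_congr hR] at hPoisson
  -- real side
  have hsumR : Summable (fun k : ℤ => ((Real.cosh ((π/(2*r)) * (x + 2*π*(k:ℝ))))^2)⁻¹) :=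
    summable_sech _ x (by positivity)
  have hofReal : ((∑' k : ℤ, ((Real.cosh ((π/(2*r)) * (x + 2*π*(k:ℝ))))^2)⁻¹ : ℝ) : ℂ)
      = ∑' k : ℤ, W r x ((k:ℤ):ℝ) := by
    rw [Complex.ofReal_tsum]
    rfl
  have hsplit := Summable.tsum_eq_add_tsum_ite hFsum 0
  have hkey : (((∑' k : ℤ, ((Real.cosh ((π/(2*r)) * (x + 2*π*(k:ℝ))))^2)⁻¹) - 2*r/π^2 : ℝ) : ℂ)
      = ∑' n : ℤ, (if n = 0 then 0 else FourierTransform.fourier (W r x) (n:ℝ)) := by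
    rw [Complex.ofReal_sub, hofReal, hPoisson, hsplit]
    rw [show ((0:ℤ):ℝ) = 0 by norm_num, FT_zero r x hr0]
    ring
  -- bound the tail
  have htermb : ∀ n : ℤ, ‖(if n = 0 then 0 else FourierTransform.fourier (W r x) (n:ℝ))‖ ≤ C * g n := by
    intro n
    by_cases hn : n = 0
    · subst hn
      simp [hg]
    · rw [if_neg hn]
      exact hFbound n hn
  have hsum2 : Summable (fun n : ℤ => ‖(if n = 0 then 0 else FourierTransform.fourier (W r x) (n:ℝ))‖) :=
    Summable.of_nonneg_of_le (fun n => norm_nonneg _) htermb (hgsum.mul_left C)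
  have habs : |(∑' k : ℤ, ((Real.cosh ((π/(2*r)) * (x + 2*π*(k:ℝ))))^2)⁻¹) - 2*r/π^2|
      = ‖(((∑' k : ℤ, ((Real.cosh ((π/(2*r)) * (x + 2*π*(k:ℝ))))^2)⁻¹) - 2*r/π^2 : ℝ) : ℂ)‖ := by
    rw [Complex.norm_real, Real.norm_eq_abs]
  rw [habs, hkey]
  calc ‖∑' n : ℤ, (if n = 0 then 0 else FourierTransform.fourier (W r x) (n:ℝ))‖
      ≤ ∑' n : ℤ, ‖(if n = 0 then 0 else FourierTransform.fourier (W r x) (n:ℝ))‖ :=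
        norm_tsum_le_tsum_norm hsum2
  _ ≤ ∑' n : ℤ, C * g n := Summable.tsum_le_tsum htermb hsum2 (hgsum.mul_left C)
  _ = C * ∑' n : ℤ, g n := tsum_mul_left
  _ ≤ C * 4 := mul_le_mul_of_nonneg_left tsum_abs_mul_exp_le hC0
  _ = (8*r^2/π^2) * Real.exp 1 * Real.exp (-r) * 4 := by rw [hC]

end Stmt0Aux
end

/-- There exists `c < ∞` such that for all `r ≥ 1` and `x ∈ ℝ`,
`|J(r,x) - 1/r| ≤ c e^{-r}`. -/
theorem stmt0 : ∃ c : ℝ, ∀ r : ℝ, 1 ≤ r → ∀ x : ℝ,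
    |Jfun r x - 1 / r| ≤ c * Real.exp (-r) := by
  refine ⟨32 * Real.exp 1, fun r hr x => ?_⟩
  have hπ := Real.pi_pos
  have hr0 : (0:ℝ) < r := lt_of_lt_of_le one_pos hr
  have hterm : ∀ k : ℤ, ((Real.cosh (π * (x + 2 * (k : ℝ) * π) / (2 * r))) ^ 2)⁻¹
      = ((Real.cosh ((π/(2*r)) * (x + 2*π*(k:ℝ))))^2)⁻¹ := by
    intro k
    rw [show π * (x + 2 * (k : ℝ) * π) / (2 * r) = (π/(2*r)) * (x + 2*π*(k:ℝ)) from by ring]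
  have hJS : Jfun r x
      = π^2/(2*r^2) * ∑' k : ℤ, ((Real.cosh ((π/(2*r)) * (x + 2*π*(k:ℝ))))^2)⁻¹ := by
    unfold Jfun
    rw [tsum_congr hterm]
  have hmb := Stmt0Aux.main_bound r x hr
  set S := ∑' k : ℤ, ((Real.cosh ((π/(2*r)) * (x + 2*π*(k:ℝ))))^2)⁻¹ with hS
  have hid : Jfun r x - 1/r = π^2/(2*r^2) * (S - 2*r/π^2) := by
    rw [hJS]
    field_simp
  rw [hid, abs_mul, abs_of_pos (show (0:ℝ) < π^2/(2*r^2) by positivity)]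
  calc π^2/(2*r^2) * |S - 2*r/π^2|
      ≤ π^2/(2*r^2) * ((8*r^2/π^2) * Real.exp 1 * Real.exp (-r) * 4) :=
        mul_le_mul_of_nonneg_left hmb (by positivity)
  _ = 16 * Real.exp 1 * Real.exp (-r) := by
      field_simp
      ring
  _ ≤ 32 * Real.exp 1 * Real.exp (-r) := by
      nlinarith [Real.exp_pos (1:ℝ), Real.exp_pos (-r)]
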